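/- Let H be a complex separable infinite-dimensional Hilbert space and T a bounded operator on H. Assume that there exists a sequence (v_i)_{i∈ℕ} in H such that {Tⁿ v_i : i ∈ ℕ, n ≥ 0} is a Parseval frame of H, and that there exist m ∈ ℕ, a finite family (w_j)_{j∈Fin m} in H and constants A, B > 0 such that {Tⁿ w_j : j ∈ Fin m, n ≥ 0} is a frame of H with bounds A, B. Then ‖T‖ = 1. -/

import Mathlib

open scoped ComplexInnerProductSpace

/-- If `T` on an infinite-dimensional separable Hilbert space
admits a Parseval frame of iterations and also a frame of iterations with finitely
many generators, then `‖T‖ = 1`. -/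
theorem norm_eq_one_of_parseval_and_finite_frame
    (H : Type*) [NormedAddCommGroup H] [InnerProductSpace ℂ H]
    [CompleteSpace H] [TopologicalSpace.SeparableSpace H]
    (hinf : ¬ FiniteDimensional ℂ H)
    (T : H →L[ℂ] H) (v : ℕ → H)
    (hParseval : ∀ x : H, ∑' p : ℕ × ℕ, ‖⟪x, (T ^ p.2) (v p.1)⟫‖ ^ 2 = ‖x‖ ^ 2)
    (m : ℕ) (w : Fin m → H) (A B : ℝ) (hA : 0 < A) (hB : 0 < B)
    (hframe : ∀ x : H,
      A * ‖x‖ ^ 2 ≤ ∑' p : Fin m × ℕ, ‖⟪x, (T ^ p.2) (w p.1)⟫‖ ^ 2 ∧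
      ∑' p : Fin m × ℕ, ‖⟪x, (T ^ p.2) (w p.1)⟫‖ ^ 2 ≤ B * ‖x‖ ^ 2) :
    ‖T‖ = 1 := by
  -- Upper bound: ‖T‖ ≤ 1, via the adjoint and the Parseval frame.
  have hle : ‖T‖ ≤ 1 := by
    have hadj : ‖ContinuousLinearMap.adjoint T‖ = ‖T‖ :=
      (ContinuousLinearMap.adjoint : (H →L[ℂ] H) ≃ₗᵢ⋆[ℂ] (H →L[ℂ] H)).norm_map T
    rw [← hadj]
    refine ContinuousLinearMap.opNorm_le_bound _ zero_le_one (fun x => ?_)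
    rw [one_mul]
    set S := ContinuousLinearMap.adjoint T with hS
    have key : ‖S x‖ ^ 2 ≤ ‖x‖ ^ 2 := by
      have h1 := hParseval (S x)
      have h2 := hParseval x
      set g : ℕ × ℕ → ℝ := fun p => ‖⟪x, (T ^ p.2) (v p.1)⟫‖ ^ 2 with hg
      have hfg : ∀ p : ℕ × ℕ, ‖⟪S x, (T ^ p.2) (v p.1)⟫‖ ^ 2 = g (p.1, p.2 + 1) := by
        intro p
        simp only [hg, hS]
        rw [ContinuousLinearMap.adjoint_inner_left, ← ContinuousLinearMap.mul_apply,
          ← pow_succ']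
      by_cases hs : Summable g
      · rw [← h2, ← h1]
        have hinj : Function.Injective (fun p : ℕ × ℕ => (p.1, p.2 + 1)) := by
          intro p q h
          simpa [Prod.ext_iff] using h
        calc ∑' p : ℕ × ℕ, ‖⟪S x, (T ^ p.2) (v p.1)⟫‖ ^ 2
            = ∑' p : ℕ × ℕ, g (p.1, p.2 + 1) := tsum_congr hfg
          _ ≤ ∑' p, g p := by
              refine Summable.tsum_le_tsum_of_inj (fun p : ℕ × ℕ => (p.1, p.2 + 1)) hinj
                (fun c _ => by positivity) (fun p => le_of_eq rfl) ?_ hs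
              exact hs.comp_injective hinj
      · have hx0 : ‖x‖ ^ 2 = 0 := by rw [← h2, tsum_eq_zero_of_not_summable hs]
        have hx : x = 0 := by
          have : ‖x‖ = 0 := by nlinarith [norm_nonneg x]
          simpa using this
        simp [hx, hx0]
    nlinarith [norm_nonneg (S x), norm_nonneg x]
  -- Lower bound: 1 ≤ ‖T‖, via the finitely generated frame.
  have hge : 1 ≤ ‖T‖ := by
    by_contra hlt
    push_neg at hlt
    set r : ℝ := ‖T‖ with hr
    have hr0 : 0 ≤ r := norm_nonneg T
    have hr2 : r ^ 2 < 1 := by nlinarith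
    have hr2nn : 0 ≤ r ^ 2 := by positivity
    set W : ℝ := ∑ j : Fin m, ‖w j‖ ^ 2 with hW
    have hWnn : 0 ≤ W := Finset.sum_nonneg fun j _ => by positivity
    set K : ℝ := W * (1 - r ^ 2)⁻¹ with hK
    have h1r2 : 0 < 1 - r ^ 2 := by nlinarith
    have hKnn : 0 ≤ K := mul_nonneg hWnn (le_of_lt (inv_pos.mpr h1r2))
    -- choose N with K * (r^2)^N < A
    obtain ⟨N, hN⟩ : ∃ N : ℕ, K * (r ^ 2) ^ N < A := by
      have h := tendsto_pow_atTop_nhds_zero_of_lt_one hr2nn hr2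
      have h' : Filter.Tendsto (fun N : ℕ => K * (r ^ 2) ^ N) Filter.atTop (nhds (K * 0)) :=
        h.const_mul K
      rw [mul_zero] at h'
      have := (h'.eventually (gt_mem_nhds hA)).exists
      exact this
    -- finite-dimensional span of the first N iterates
    set Sp : Submodule ℂ H :=
      Submodule.span ℂ (Set.range fun p : Fin m × Fin N => (T ^ (p.2 : ℕ)) (w p.1)) with hSp
    have hSpfd : FiniteDimensional ℂ Sp := by
      apply FiniteDimensional.span_of_finite
      exact Set.finite_range _
    have hSpne : Sp ≠ ⊤ := by
      intro htop
      apply hinf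
      have : FiniteDimensional ℂ (⊤ : Submodule ℂ H) := htop ▸ hSpfd
      exact (Submodule.topEquiv : (⊤ : Submodule ℂ H) ≃ₗ[ℂ] H).finiteDimensional
    obtain ⟨x, hx⟩ : ∃ x : H, x ∉ Sp := by
      by_contra h
      push_neg at h
      exact hSpne (Submodule.eq_top_iff'.2 h)
    haveI : CompleteSpace Sp := FiniteDimensional.complete ℂ Sp
    set y : H := x - (Sp.orthogonalProjectionOnto x : H) with hy
    have hymem : y ∈ Spᗮ := Submodule.sub_starProjection_mem_orthogonal x
    have hyne : y ≠ 0 := by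
      intro h0
      apply hx
      have : x = (Sp.orthogonalProjectionOnto x : H) := by
        have := sub_eq_zero.mp h0
        simpa [hy] using this
      rw [this]; exact Submodule.coe_mem _
    have hynorm : 0 < ‖y‖ ^ 2 := pow_pos (norm_pos_iff.mpr hyne) 2
    -- terms with n < N vanish
    have hzero : ∀ p : Fin m × ℕ, p.2 < N → ⟪y, (T ^ p.2) (w p.1)⟫ = 0 := by
      intro p hp
      have hmem : (T ^ p.2) (w p.1) ∈ Sp := by
        apply Submodule.subset_span
        exact ⟨(p.1, ⟨p.2, hp⟩), rfl⟩
      exact Submodule.inner_left_of_mem_orthogonal hmem hymem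
    set f : Fin m × ℕ → ℝ := fun p => ‖⟪y, (T ^ p.2) (w p.1)⟫‖ ^ 2 with hf
    have hfA : A * ‖y‖ ^ 2 ≤ ∑' p, f p := (hframe y).1
    -- bound the tail sum
    have hbound : ∑' p, f p ≤ ‖y‖ ^ 2 * (K * (r ^ 2) ^ N) := by
      by_cases hsf : Summable f
      · set ι : Fin m × ℕ → Fin m × ℕ := fun p => (p.1, p.2 + N) with hι
        have hιinj : Function.Injective ι := by
          intro p q h
          simpa [hι, Prod.ext_iff] using h
        have hsupp : Function.support f ⊆ Set.range ι := by
          intro p hp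
          by_cases hpN : N ≤ p.2
          · exact ⟨(p.1, p.2 - N), by simp [hι, Nat.sub_add_cancel hpN]⟩
          · exfalso
            apply hp
            simp only [hf, hzero p (not_le.mp hpN), norm_zero]
            simp
        have heq : ∑' p, f (ι p) = ∑' p, f p := hιinj.tsum_eq hsupp
        set g : Fin m × ℕ → ℝ :=
          fun p => (‖y‖ ^ 2 * ‖w p.1‖ ^ 2 * (r ^ 2) ^ N) * (r ^ 2) ^ p.2 with hgdef
        have hgsum : Summable g := by
          have h1 : Summable (fun j : Fin m => ‖y‖ ^ 2 * ‖w j‖ ^ 2 * (r ^ 2) ^ N) :=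
            summable_of_finite_support (Set.toFinite _)
          have h2 : Summable (fun n : ℕ => (r ^ 2) ^ n) :=
            summable_geometric_of_lt_one hr2nn hr2
          exact h1.mul_of_nonneg h2 (fun j => by positivity) (fun n => by positivity)
        have hle' : ∀ p : Fin m × ℕ, f (ι p) ≤ g p := by
          intro p
          have h1 : ‖⟪y, (T ^ (p.2 + N)) (w p.1)⟫‖ ≤ ‖y‖ * ‖(T ^ (p.2 + N)) (w p.1)‖ :=
            norm_inner_le_norm _ _
          have hpowgen : ∀ (n : ℕ) (u : H), ‖(T ^ n) u‖ ≤ r ^ n * ‖u‖ := by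
            intro n
            induction n with
            | zero => intro u; simp
            | succ k ih =>
              intro u
              rw [pow_succ', ContinuousLinearMap.mul_apply]
              calc ‖T ((T ^ k) u)‖ ≤ r * ‖(T ^ k) u‖ := T.le_opNorm _
                _ ≤ r * (r ^ k * ‖u‖) := by
                    have := ih u
                    nlinarith [norm_nonneg ((T ^ k) u)]
                _ = r ^ (k + 1) * ‖u‖ := by ring
          have h2 : ‖(T ^ (p.2 + N)) (w p.1)‖ ≤ r ^ (p.2 + N) * ‖w p.1‖ :=
            hpowgen _ _
          have : ‖⟪y, (T ^ (p.2 + N)) (w p.1)⟫‖ ≤ ‖y‖ * (r ^ (p.2 + N) * ‖w p.1‖) := by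
            calc ‖⟪y, (T ^ (p.2 + N)) (w p.1)⟫‖ ≤ ‖y‖ * ‖(T ^ (p.2 + N)) (w p.1)‖ := h1
              _ ≤ ‖y‖ * (r ^ (p.2 + N) * ‖w p.1‖) := by
                  have := norm_nonneg y
                  nlinarith [norm_nonneg ((T ^ (p.2 + N)) (w p.1))]
          have hsq : f (ι p) ≤ (‖y‖ * (r ^ (p.2 + N) * ‖w p.1‖)) ^ 2 := by
            simp only [hf, hι]
            exact pow_le_pow_left₀ (norm_nonneg _) this 2
          calc f (ι p) ≤ (‖y‖ * (r ^ (p.2 + N) * ‖w p.1‖)) ^ 2 := hsq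
            _ = g p := by
                simp only [hgdef]
                ring
        have hfι : Summable (fun p => f (ι p)) := hsf.comp_injective hιinj
        have hgval : ∑' p, g p = ‖y‖ ^ 2 * (K * (r ^ 2) ^ N) := by
          rw [Summable.tsum_prod' hgsum (fun b => (hgsum.prod_factor b))]
          simp only [hgdef]
          have : ∀ j : Fin m,
              ∑' n : ℕ, (‖y‖ ^ 2 * ‖w j‖ ^ 2 * (r ^ 2) ^ N) * (r ^ 2) ^ n
                = (‖y‖ ^ 2 * ‖w j‖ ^ 2 * (r ^ 2) ^ N) * (1 - r ^ 2)⁻¹ := by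
            intro j
            rw [tsum_mul_left, tsum_geometric_of_lt_one hr2nn hr2]
          rw [tsum_fintype]
          simp only [this]
          rw [hK, hW]
          simp only [Finset.sum_mul, Finset.mul_sum]
          exact Finset.sum_congr rfl fun j _ => by ring
        calc ∑' p, f p = ∑' p, f (ι p) := heq.symm
          _ ≤ ∑' p, g p := Summable.tsum_le_tsum hle' hfι hgsum
          _ = ‖y‖ ^ 2 * (K * (r ^ 2) ^ N) := hgval
      · rw [tsum_eq_zero_of_not_summable hsf]
        exact mul_nonneg (by positivity) (mul_nonneg hKnn (by positivity))
    have : A * ‖y‖ ^ 2 < A * ‖y‖ ^ 2 := by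
      calc A * ‖y‖ ^ 2 ≤ ∑' p, f p := hfA
        _ ≤ ‖y‖ ^ 2 * (K * (r ^ 2) ^ N) := hbound
        _ < ‖y‖ ^ 2 * A := by exact (mul_lt_mul_iff_right₀ hynorm).mpr hN
        _ = A * ‖y‖ ^ 2 := mul_comm _ _
    exact lt_irrefl _ this
  exact le_antisymm hle hge
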